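/- Let p be prime, ξ ∈ ℚ_p, and n ≥ 1. Then λ̂_n(ξ) ≤ max{1/n, 1/λ_1(ξ)}. -/

import Mathlib

open scoped ENNReal

def SimAt (p : ℕ) [Fact p.Prime] (n : ℕ) (ξ : ℚ_[p]) (lam X : ℝ) : Prop :=
  ∃ x : ℕ → ℤ, (∀ i ≤ n, (|x i| : ℝ) ≤ X) ∧
    (∃ m, 1 ≤ m ∧ m ≤ n ∧ (x 0 : ℚ_[p]) * ξ ^ m ≠ (x m : ℚ_[p])) ∧
    (∀ m, 1 ≤ m → m ≤ n → ‖(x 0 : ℚ_[p]) * ξ ^ m - (x m : ℚ_[p])‖ ≤ X ^ (-lam - 1))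

/-- The exponent `λ_n(ξ)` of simultaneous rational approximation. -/
noncomputable def lambdaExp (p : ℕ) [Fact p.Prime] (n : ℕ) (ξ : ℚ_[p]) : ℝ≥0∞ :=
  sSup {l : ℝ≥0∞ | ∃ lam : ℝ, l = ENNReal.ofReal lam ∧ ∀ X₀ : ℝ, ∃ X, X₀ ≤ X ∧ SimAt p n ξ lam X}


/-- The uniform exponent `λ̂_n(ξ)`. -/
noncomputable def lambdaHatExp (p : ℕ) [Fact p.Prime] (n : ℕ) (ξ : ℚ_[p]) : ℝ≥0∞ :=
  sSup {l : ℝ≥0∞ | ∃ lam : ℝ, l = ENNReal.ofReal lam ∧ ∃ X₀ : ℝ, ∀ X, X₀ ≤ X → SimAt p n ξ lam X}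


theorem norm_int_ge (p : ℕ) [hp : Fact p.Prime] (k : ℤ) (hk : k ≠ 0) :
    (1:ℝ)/|(k:ℝ)| ≤ ‖(k : ℚ_[p])‖ := by
  have hppos : (0:ℝ) < p := by exact_mod_cast hp.out.pos
  have hm : ((p:ℤ) ^ padicValInt p k) ∣ k := padicValInt_dvd k
  have hle : ((p:ℤ) ^ padicValInt p k) ≤ |k| :=
    Int.le_of_dvd (abs_pos.mpr hk) ((dvd_abs _ _).mpr hm)
  have hnorm : ‖(k : ℚ_[p])‖ = (p:ℝ) ^ (-(padicValInt p k : ℤ)) := by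
    have h1 : ‖((k:ℚ) : ℚ_[p])‖ = padicNorm p (k:ℚ) := Padic.eq_padicNorm _
    have h2 : padicNorm p (k:ℚ) = (p:ℚ) ^ (-(padicValInt p k : ℤ)) := by
      rw [padicNorm.eq_zpow_of_nonzero (by exact_mod_cast hk)]
      congr 2
      exact_mod_cast padicValRat.of_int (p := p) (z := k)
    rw [show ((k:ℚ_[p])) = ((k:ℚ):ℚ_[p]) by norm_cast, h1]
    rw [h2]; push_cast; ring
  rw [hnorm, zpow_neg, ← one_div]
  have h3 : ((p:ℝ) ^ (padicValInt p k : ℤ)) ≤ |(k:ℝ)| := by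
    calc ((p:ℝ) ^ (padicValInt p k : ℤ)) = (((p:ℤ) ^ padicValInt p k : ℤ) : ℝ) := by
          push_cast [zpow_natCast]; ring
    _ ≤ ((|k| : ℤ) : ℝ) := by exact_mod_cast hle
    _ = |(k:ℝ)| := by push_cast; ring
  exact one_div_le_one_div_of_le (by positivity) h3

/-- The key "forcing" lemma. -/
theorem forcing (p : ℕ) [Fact p.Prime] (n : ℕ) (ξ : ℚ_[p]) (hn : 1 ≤ n)
    (lam X' : ℝ) (hX' : 0 < X') (a b : ℤ) (ha : a ≠ 0) (hb : b ≠ 0) (hab : IsCoprime a b)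
    (hδ : X' ^ (-lam-1) * (2 * ((max |a| |b| : ℤ):ℝ) * X') < 1)
    (hs : (max 1 ‖ξ‖)^(n-1) * ‖(b:ℚ_[p])*ξ - (a:ℚ_[p])‖ * (2 * ((max |a| |b| : ℤ):ℝ) * X') < 1)
    (hsim : SimAt p n ξ lam X') :
    (((max |a| |b| : ℤ):ℝ))^n ≤ X' := by
  obtain ⟨x, hx, ⟨m0, hm01, hm0n, hne⟩, hap⟩ := hsim
  set q : ℝ := ((max |a| |b| : ℤ):ℝ) with hq
  have hq1 : 1 ≤ q := by
    have h : (1:ℤ) ≤ max |a| |b| := le_trans (Int.one_le_abs ha) (le_max_left _ _)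
    rw [hq]; exact_mod_cast h
  have haq : (|a|:ℝ) ≤ q := by rw [hq]; exact_mod_cast (le_max_left |a| |b|)
  have hbq : (|b|:ℝ) ≤ q := by rw [hq]; exact_mod_cast (le_max_right |a| |b|)
  set δ : ℝ := X' ^ (-lam-1) with hδdef
  have hδ0 : 0 ≤ δ := Real.rpow_nonneg hX'.le _
  set C : ℝ := (max 1 ‖ξ‖)^(n-1) with hC
  have hC1 : (1:ℝ) ≤ C := one_le_pow₀ (le_max_left _ _)
  set s : ℝ := ‖(b:ℚ_[p])*ξ - (a:ℚ_[p])‖ with hsdef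
  have hs0 : 0 ≤ s := norm_nonneg _
  have hbound : ∀ j ≤ n, ‖(x 0 : ℚ_[p]) * ξ ^ j - (x j : ℚ_[p])‖ ≤ δ := by
    intro j hj
    rcases Nat.eq_zero_or_pos j with rfl | hj1
    · simp [hδ0]
    · exact hap j hj1 hj
  -- Step 1
  have step1 : ∀ k : ℕ, k + 1 ≤ n → b * x (k+1) = a * x k := by
    intro k hk
    by_contra hw
    set w : ℤ := b * x (k+1) - a * x k with hwdef
    have hwne : w ≠ 0 := sub_ne_zero.mpr hw
    have hwabs : |(w:ℝ)| ≤ 2 * q * X' := by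
      have h1 : (|x (k+1)|:ℝ) ≤ X' := hx _ hk
      have h2 : (|x k|:ℝ) ≤ X' := hx _ (le_trans (Nat.le_succ k) hk)
      have hq0 : (0:ℝ) ≤ q := le_trans zero_le_one hq1
      calc |(w:ℝ)| = |(b:ℝ) * (x (k+1):ℝ) - (a:ℝ) * (x k : ℝ)| := by rw [hwdef]; push_cast; ring_nf
      _ ≤ |(b:ℝ) * (x (k+1):ℝ)| + |(a:ℝ) * (x k : ℝ)| := abs_sub _ _
      _ = |(b:ℝ)| * |((x (k+1):ℤ):ℝ)| + |(a:ℝ)| * |((x k:ℤ):ℝ)| := by rw [abs_mul, abs_mul]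
      _ ≤ q * X' + q * X' := add_le_add
            (mul_le_mul hbq h1 (abs_nonneg _) hq0)
            (mul_le_mul haq h2 (abs_nonneg _) hq0)
      _ = 2 * q * X' := by ring
    -- norm bound
    have hwid : ((w:ℤ):ℚ_[p]) =
        (x 0 : ℚ_[p]) * ξ ^ k * ((b:ℚ_[p]) * ξ - (a:ℚ_[p]))
          + ((a:ℚ_[p]) * ((x 0 : ℚ_[p]) * ξ ^ k - (x k : ℚ_[p]))
             - (b:ℚ_[p]) * ((x 0 : ℚ_[p]) * ξ ^ (k+1) - (x (k+1) : ℚ_[p]))) := by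
      rw [hwdef]; push_cast; ring
    have hnw : ‖((w:ℤ):ℚ_[p])‖ ≤ max (C * s) δ := by
      rw [hwid]
      refine (Padic.nonarchimedean _ _).trans ?_
      apply max_le_max
      · -- first term ≤ C * s
        rw [norm_mul, norm_mul, norm_pow]
        have e1 : ‖((x 0 : ℤ):ℚ_[p])‖ ≤ 1 := Padic.norm_int_le_one _
        have e2 : ‖ξ‖ ^ k ≤ C := by
          rw [hC]
          calc ‖ξ‖ ^ k ≤ (max 1 ‖ξ‖) ^ k := pow_le_pow_left₀ (norm_nonneg _) (le_max_right _ _) _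
          _ ≤ (max 1 ‖ξ‖) ^ (n-1) := pow_le_pow_right₀ (le_max_left _ _) (by omega)
        calc ‖((x 0:ℤ):ℚ_[p])‖ * ‖ξ‖^k * s ≤ 1 * C * s := by
              apply mul_le_mul_of_nonneg_right _ hs0
              exact mul_le_mul e1 e2 (by positivity) zero_le_one
        _ = C * s := by ring
      · -- second term ≤ δ
        have e1 : ‖((a:ℤ):ℚ_[p]) * ((x 0 : ℚ_[p]) * ξ ^ k - (x k : ℚ_[p]))‖ ≤ δ := by
          rw [norm_mul]
          calc ‖((a:ℤ):ℚ_[p])‖ * ‖(x 0 : ℚ_[p]) * ξ ^ k - (x k : ℚ_[p])‖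
              ≤ 1 * δ := mul_le_mul (Padic.norm_int_le_one _)
                (hbound k (by omega)) (norm_nonneg _) zero_le_one
          _ = δ := one_mul _
        have e2 : ‖((b:ℤ):ℚ_[p]) * ((x 0 : ℚ_[p]) * ξ ^ (k+1) - (x (k+1) : ℚ_[p]))‖ ≤ δ := by
          rw [norm_mul]
          calc ‖((b:ℤ):ℚ_[p])‖ * ‖(x 0 : ℚ_[p]) * ξ ^ (k+1) - (x (k+1) : ℚ_[p])‖
              ≤ 1 * δ := mul_le_mul (Padic.norm_int_le_one _)
                (hbound (k+1) hk) (norm_nonneg _) zero_le_one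
          _ = δ := one_mul _
        rw [sub_eq_add_neg]
        refine (Padic.nonarchimedean _ _).trans (max_le e1 ?_)
        rw [norm_neg]; exact e2
    -- contradiction
    have hw1 : (1:ℝ) ≤ |(w:ℝ)| * max (C * s) δ := by
      have := norm_int_ge p w hwne
      have habs : (0:ℝ) < |(w:ℝ)| := by
        have : (w:ℝ) ≠ 0 := Int.cast_ne_zero.mpr hwne
        exact abs_pos.mpr this
      calc (1:ℝ) = (1/|(w:ℝ)|) * |(w:ℝ)| := by field_simp
      _ ≤ ‖((w:ℤ):ℚ_[p])‖ * |(w:ℝ)| := by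
          apply mul_le_mul_of_nonneg_right (norm_int_ge p w hwne) habs.le
      _ ≤ (max (C * s) δ) * |(w:ℝ)| := mul_le_mul_of_nonneg_right hnw habs.le
      _ = |(w:ℝ)| * max (C * s) δ := by ring
    have hlt : |(w:ℝ)| * max (C * s) δ < 1 := by
      have hq0 : (0:ℝ) < 2 * q * X' := by positivity
      have hmax0 : 0 ≤ max (C * s) δ := le_max_of_le_right hδ0
      calc |(w:ℝ)| * max (C * s) δ ≤ (2 * q * X') * max (C * s) δ :=
            mul_le_mul_of_nonneg_right hwabs hmax0
      _ = max (C * s * (2 * q * X')) (δ * (2 * q * X')) := by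
          rw [mul_comm, ← max_mul_of_nonneg _ _ hq0.le]
      _ < 1 := max_lt hs hδ
    linarith
  -- Step 2 : x m * b^m = x 0 * a^m
  have step2 : ∀ m : ℕ, m ≤ n → x m * b ^ m = x 0 * a ^ m := by
    intro m
    induction m with
    | zero => intro _; simp
    | succ k ih =>
      intro hk
      have h1 := step1 k hk
      have h2 := ih (by omega)
      calc x (k+1) * b ^ (k+1) = (b * x (k+1)) * b ^ k := by ring
      _ = (a * x k) * b ^ k := by rw [h1]
      _ = a * (x k * b ^ k) := by ring
      _ = a * (x 0 * a ^ k) := by rw [h2]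
      _ = x 0 * a ^ (k+1) := by ring
  -- Step 3 : x 0 ≠ 0
  have hx0 : x 0 ≠ 0 := by
    intro h0
    apply hne
    have h1 := step2 m0 hm0n
    rw [h0, zero_mul] at h1
    have hbm : (b:ℤ) ^ m0 ≠ 0 := pow_ne_zero _ hb
    have hxm0 : x m0 = 0 := by
      rcases mul_eq_zero.mp h1 with h | h
      · exact h
      · exact absurd h hbm
    rw [hxm0, h0]
    simp
  -- Step 4 : b^n ∣ x 0
  have hdvd : b ^ n ∣ x 0 := by
    have h1 : b ^ n ∣ x 0 * a ^ n := ⟨x n, by rw [← step2 n le_rfl]; ring⟩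
    exact (IsCoprime.pow (hab.symm)).dvd_of_dvd_mul_right h1
  -- Step 5 : |b|^n ≤ |x 0|
  have hb5 : |b| ^ n ≤ |x 0| := by
    rw [← abs_pow]
    exact Int.le_of_dvd (abs_pos.mpr hx0) ((abs_dvd _ _).mpr ((dvd_abs _ _).mpr hdvd))
  -- Step 6 : |a|^n ≤ |x n|
  have ha6 : |a| ^ n ≤ |x n| := by
    have h1 : |x n| * |b| ^ n = |x 0| * |a| ^ n := by
      rw [← abs_pow, ← abs_pow, ← abs_mul, ← abs_mul, step2 n le_rfl]
    have hbpos : (0:ℤ) < |b| ^ n := pow_pos (abs_pos.mpr hb) n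
    have h2 : |b| ^ n * |a| ^ n ≤ |x n| * |b| ^ n := by
      rw [h1]
      exact mul_le_mul_of_nonneg_right hb5 (pow_nonneg (abs_nonneg _) _)
    have := le_of_mul_le_mul_right (by linarith [h2] : |a| ^ n * |b| ^ n ≤ |x n| * |b| ^ n) hbpos
    exact this
  -- Step 7
  have h7 : (max |a| |b|) ^ n ≤ max |x n| |x 0| := by
    rcases max_cases |a| |b| with ⟨h, _⟩ | ⟨h, _⟩
    · rw [h]; exact le_max_of_le_left ha6
    · rw [h]; exact le_max_of_le_right hb5
  have hxn : (|x n| : ℝ) ≤ X' := hx n le_rfl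
  have hx0' : (|x 0| : ℝ) ≤ X' := hx 0 (by omega)
  have h8 : ((max |a| |b| : ℤ):ℝ) ^ n ≤ X' := by
    calc ((max |a| |b| : ℤ):ℝ) ^ n = (((max |a| |b|) ^ n : ℤ) : ℝ) := by push_cast; ring
    _ ≤ ((max |x n| |x 0| : ℤ) : ℝ) := by exact_mod_cast h7
    _ ≤ X' := by
        rcases max_cases |x n| |x 0| with ⟨h, _⟩ | ⟨h, _⟩
        · rw [h]; exact_mod_cast hxn
        · rw [h]; exact_mod_cast hx0'
  exact h8

theorem irrat_helper (p : ℕ) [Fact p.Prime] (ξ : ℚ_[p]) (hξ : Transcendental ℚ ξ)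
    (a b : ℤ) (hb : b ≠ 0) : (b:ℚ_[p]) * ξ ≠ (a:ℚ_[p]) := by
  intro h
  apply hξ
  have hbp : ((b:ℚ_[p])) ≠ 0 := by exact_mod_cast hb
  have hxi : ξ = (((a:ℚ)/(b:ℚ) : ℚ) : ℚ_[p]) := by
    push_cast
    rw [eq_div_iff hbp, mul_comm]
    exact h
  rw [hxi]
  exact isAlgebraic_rat ℚ _

lemma rpow_big {E e X : ℝ} (hE : 0 < E) (he : 0 < e) (hX : E^(1/e) < X) : E < X^e := by
  have h0 : (0:ℝ) ≤ E^(1/e) := Real.rpow_nonneg hE.le _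
  have h := Real.rpow_lt_rpow h0 hX he
  rwa [← Real.rpow_mul hE.le, one_div_mul_cancel he.ne', Real.rpow_one] at h

theorem main_contra (p : ℕ) [Fact p.Prime] (n : ℕ) (ξ : ℚ_[p])
    (hξ : Transcendental ℚ ξ) (hn : 1 ≤ n) (lam μ : ℝ)
    (hlamn : 1/(n:ℝ) < lam) (hμ : 0 < μ) (hlamμ : 1 < lam * μ)
    (X₀ : ℝ) (hu : ∀ X, X₀ ≤ X → SimAt p n ξ lam X)
    (happ : ∀ X₀' : ℝ, ∃ X, X₀' ≤ X ∧ SimAt p 1 ξ μ X) : False := by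
  have hnR : (0:ℝ) < n := by exact_mod_cast hn
  have hlam0 : 0 < lam := lt_trans (by positivity) hlamn
  have hinvlam : 1/lam < n := by
    rw [div_lt_iff₀ hlam0]
    rw [div_lt_iff₀ hnR] at hlamn
    linarith [hlamn]
  have hμinv : 1/lam < μ := by
    rw [div_lt_iff₀ hlam0]
    linarith [hlamμ]
  set C : ℝ := (max 1 ‖ξ‖)^(n-1) with hC
  have hC1 : (1:ℝ) ≤ C := one_le_pow₀ (le_max_left _ _)
  set K : ℝ := max X₀ 1 + 1 with hK
  have hK1 : (1:ℝ) < K := by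
    have : (1:ℝ) ≤ max X₀ 1 := le_max_right _ _
    linarith
  have hKX₀ : X₀ ≤ K := by
    have : X₀ ≤ max X₀ 1 := le_max_left _ _
    linarith
  have hK0 : (0:ℝ) < K := lt_trans one_pos hK1
  -- exponent e0
  set e0 : ℝ := (n:ℝ) - 1/lam with he0
  have he0pos : 0 < e0 := by rw [he0]; linarith
  set B : ℝ := K * 2^(1/lam:ℝ) with hB
  have h2pow : (0:ℝ) < 2^(1/lam:ℝ) := Real.rpow_pos_of_pos two_pos _
  have hBpos : 0 < B := by positivity
  set Q0 : ℝ := max 2 (B^(1/e0) + 1) with hQ0def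
  have hQ0two : (2:ℝ) ≤ Q0 := le_max_left _ _
  have hQ0 : ∀ qr : ℝ, Q0 ≤ qr → K * (2*qr)^(1/lam:ℝ) < qr^(n:ℝ) := by
    intro qr hqr
    have hqr2 : (2:ℝ) ≤ qr := le_trans hQ0two hqr
    have hqr0 : (0:ℝ) < qr := by linarith
    have hBq : B^(1/e0) < qr := by
      have : B^(1/e0) + 1 ≤ Q0 := le_max_right _ _
      linarith
    have h1 : B < qr^e0 := rpow_big hBpos he0pos hBq
    have h2 : K * (2*qr)^(1/lam:ℝ) = B * qr^(1/lam:ℝ) := by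
      rw [Real.mul_rpow (by norm_num) hqr0.le, hB]; ring
    rw [h2]
    calc B * qr^(1/lam:ℝ) < qr^e0 * qr^(1/lam:ℝ) :=
          mul_lt_mul_of_pos_right h1 (Real.rpow_pos_of_pos hqr0 _)
    _ = qr^(e0 + 1/lam) := (Real.rpow_add hqr0 _ _).symm
    _ = qr^(n:ℝ) := by rw [he0]; ring_nf
  -- finite minimum of small approximations
  set M : ℕ := ⌈Q0⌉₊ with hM
  have hQ0M : Q0 ≤ (M:ℝ) := Nat.le_ceil _
  set T : Finset (ℤ × ℤ) :=
    ((Finset.Icc (-(M:ℤ)) (M:ℤ)) ×ˢ (Finset.Icc (-(M:ℤ)) (M:ℤ))).erase (0,0) with hT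
  have hM1 : (1:ℤ) ≤ (M:ℤ) := by
    have : (1:ℝ) ≤ (M:ℝ) := le_trans (by norm_num) (le_trans hQ0two hQ0M)
    exact_mod_cast this
  have hTne : T.Nonempty := by
    refine ⟨(1,0), ?_⟩
    rw [hT, Finset.mem_erase]
    constructor
    · simp
    · rw [Finset.mem_product]
      constructor <;> (rw [Finset.mem_Icc]; omega)
  obtain ⟨z, hzT, hzmin⟩ := T.exists_min_image
    (fun z => ‖(z.2:ℚ_[p])*ξ - (z.1:ℚ_[p])‖) hTne
  set smin : ℝ := ‖(z.2:ℚ_[p])*ξ - (z.1:ℚ_[p])‖ with hsmin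
  have hz00 : z ≠ (0,0) := (Finset.mem_erase.mp hzT).1
  have hsmin0 : 0 < smin := by
    rw [hsmin]
    rcases eq_or_ne z.2 0 with h2 | h2
    · have h1 : z.1 ≠ 0 := by
        intro h1
        exact hz00 (Prod.ext h1 h2)
      have : ((z.1:ℤ):ℚ_[p]) ≠ 0 := by exact_mod_cast h1
      rw [h2]
      simp only [Int.cast_zero, zero_mul, zero_sub, norm_neg]
      exact norm_pos_iff.mpr this
    · have := irrat_helper p ξ hξ z.1 z.2 h2
      have hne : (z.2:ℚ_[p])*ξ - (z.1:ℚ_[p]) ≠ 0 := sub_ne_zero.mpr this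
      exact norm_pos_iff.mpr hne
  -- choose X
  set B1 : ℝ := 2*C*K*2^(1/lam:ℝ) with hB1
  have hB1pos : 0 < B1 := by positivity
  have hμe : 0 < μ - 1/lam := by linarith
  obtain ⟨X, hXge, hsimX⟩ :=
    happ (max 2 (max ((1/smin)^(1/μ:ℝ)+1) (B1^(1/(μ-1/lam))+1)))
  have hX2 : (2:ℝ) ≤ X := le_trans (le_max_left _ _) hXge
  have hX1 : (1:ℝ) < X := by linarith
  have hX0 : (0:ℝ) < X := by linarith
  have P2 : X^(-μ) < smin := by
    have h1 : (1/smin)^(1/μ:ℝ) < X := by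
      have := le_trans (le_trans (le_max_left _ _) (le_max_right 2 _)) hXge
      linarith
    have h2 : 1/smin < X^μ := rpow_big (by positivity) hμ h1
    rw [Real.rpow_neg hX0.le]
    rw [one_div] at h2
    calc (X^μ)⁻¹ < (smin⁻¹)⁻¹ := by
          apply inv_strictAnti₀ (by positivity) h2
    _ = smin := inv_inv _
  have P3 : B1 < X^(μ - 1/lam) := by
    have h1 : B1^(1/(μ-1/lam)) < X := by
      have := le_trans (le_trans (le_max_right ((1/smin)^(1/μ:ℝ)+1) _) (le_max_right 2 _)) hXge
      linarith
    exact rpow_big hB1pos hμe h1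
  -- unpack the degree-1 approximation
  obtain ⟨y, hy, ⟨m1, hm11, hm12, hyne⟩, hyap⟩ := hsimX
  have hm1eq : m1 = 1 := le_antisymm hm12 hm11
  rw [hm1eq, pow_one] at hyne
  have ht : ‖(y 0 : ℚ_[p]) * ξ - (y 1 : ℚ_[p])‖ ≤ X^(-μ-1) := by
    have := hyap 1 le_rfl le_rfl
    rwa [pow_one] at this
  set t : ℝ := ‖(y 0 : ℚ_[p]) * ξ - (y 1 : ℚ_[p])‖ with htdef
  have ht0 : 0 ≤ t := norm_nonneg _
  have hynz : ¬(y 0 = 0 ∧ y 1 = 0) := by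
    rintro ⟨h0, h1⟩
    apply hyne
    rw [h0, h1]
    simp
  -- gcd reduction
  set g : ℕ := Int.gcd (y 0) (y 1) with hg
  have hgpos : 0 < g := by
    rw [hg, Int.gcd_pos_iff]
    by_contra h
    push_neg at h
    exact hynz ⟨h.1, h.2⟩
  set b : ℤ := y 0 / (g:ℤ) with hb
  set a : ℤ := y 1 / (g:ℤ) with ha
  have hgb : (g:ℤ) * b = y 0 := Int.mul_ediv_cancel' (Int.gcd_dvd_left _ _)
  have hga : (g:ℤ) * a = y 1 := Int.mul_ediv_cancel' (Int.gcd_dvd_right _ _)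
  have hgcd1 : Int.gcd b a = 1 := Int.gcd_div_gcd_div_gcd hgpos
  have hco : IsCoprime a b := (Int.isCoprime_iff_gcd_eq_one.mpr hgcd1).symm
  have habnz : ¬(a = 0 ∧ b = 0) := by
    rintro ⟨h1, h2⟩
    apply hynz
    constructor
    · rw [← hgb, h2, mul_zero]
    · rw [← hga, h1, mul_zero]
  set qZ : ℤ := max |a| |b| with hqZ
  set q : ℝ := (qZ:ℝ) with hq
  have hq1 : (1:ℝ) ≤ q := by
    have h1 : (1:ℤ) ≤ qZ := by
      rcases not_and_or.mp habnz with h | h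
      · exact le_trans (Int.one_le_abs h) (le_max_left _ _)
      · exact le_trans (Int.one_le_abs h) (le_max_right _ _)
    rw [hq]; exact_mod_cast h1
  have hq0 : (0:ℝ) < q := lt_of_lt_of_le one_pos hq1
  set s : ℝ := ‖(b:ℚ_[p])*ξ - (a:ℚ_[p])‖ with hs
  have hgid : (y 0 : ℚ_[p]) * ξ - (y 1 : ℚ_[p]) = ((g:ℤ):ℚ_[p]) * ((b:ℚ_[p])*ξ - (a:ℚ_[p])) := by
    rw [← hgb, ← hga]
    push_cast
    ring
  have hts : t = ‖((g:ℤ):ℚ_[p])‖ * s := by rw [htdef, hgid, norm_mul, hs]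
  have hspos : 0 < s := by
    rw [hs]
    rcases eq_or_ne b 0 with h2 | h2
    · have h1 : a ≠ 0 := by
        intro h1; exact habnz ⟨h1, h2⟩
      have : ((a:ℤ):ℚ_[p]) ≠ 0 := by exact_mod_cast h1
      rw [h2]
      simp only [Int.cast_zero, zero_mul, zero_sub, norm_neg]
      exact norm_pos_iff.mpr this
    · exact norm_pos_iff.mpr (sub_ne_zero.mpr (irrat_helper p ξ hξ a b h2))
  have hgR : (1:ℝ) ≤ (g:ℝ) := by exact_mod_cast hgpos
  have hsle : s ≤ t * g := by
    have h1 : (1:ℝ)/|((g:ℤ):ℝ)| ≤ ‖((g:ℤ):ℚ_[p])‖ := norm_int_ge p (g:ℤ) (by exact_mod_cast hgpos.ne')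
    have h2 : |((g:ℤ):ℝ)| = (g:ℝ) := by
      rw [abs_of_nonneg (by positivity : (0:ℝ) ≤ (((g:ℤ):ℝ)))]
      push_cast; ring
    rw [h2] at h1
    have h3 : (1:ℝ) ≤ ‖((g:ℤ):ℚ_[p])‖ * g := by
      rw [div_le_iff₀ (by positivity : (0:ℝ) < (g:ℝ))] at h1
      linarith
    calc s = s * 1 := (mul_one s).symm
    _ ≤ s * (‖((g:ℤ):ℚ_[p])‖ * g) := by
        apply mul_le_mul_of_nonneg_left h3 hspos.le
    _ = (‖((g:ℤ):ℚ_[p])‖ * s) * g := by ring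
    _ = t * g := by rw [← hts]
  have hgq : (g:ℝ) * q ≤ X := by
    have h0 : |(y 0 : ℤ)| = (g:ℤ) * |b| := by
      rw [← hgb, abs_mul, abs_of_nonneg (by positivity : (0:ℤ) ≤ (g:ℤ))]
    have h1 : |(y 1 : ℤ)| = (g:ℤ) * |a| := by
      rw [← hga, abs_mul, abs_of_nonneg (by positivity : (0:ℤ) ≤ (g:ℤ))]
    have hy0 : ((|y 0| : ℤ) : ℝ) ≤ X := by rw [Int.cast_abs]; exact hy 0 (by omega)
    have hy1 : ((|y 1| : ℤ) : ℝ) ≤ X := by rw [Int.cast_abs]; exact hy 1 le_rfl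
    have : (g:ℤ) * qZ = max |(y 1:ℤ)| |(y 0:ℤ)| := by
      rw [h0, h1, hqZ]
      rw [mul_max_of_nonneg _ _ (by positivity : (0:ℤ) ≤ (g:ℤ))]
    have h2 : (((g:ℤ) * qZ : ℤ):ℝ) ≤ X := by
      rw [this]
      rcases max_cases |(y 1:ℤ)| |(y 0:ℤ)| with ⟨hh, _⟩ | ⟨hh, _⟩
      · rw [hh]; exact hy1
      · rw [hh]; exact hy0
    calc (g:ℝ) * q = (((g:ℤ) * qZ : ℤ):ℝ) := by push_cast [hq]; ring
    _ ≤ X := h2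
  have hqX : q ≤ X := by
    calc q = 1 * q := (one_mul q).symm
    _ ≤ (g:ℝ) * q := mul_le_mul_of_nonneg_right hgR hq0.le
    _ ≤ X := hgq
  have hsq : s * q ≤ X^(-μ) := by
    calc s * q ≤ (t * g) * q := mul_le_mul_of_nonneg_right hsle hq0.le
    _ = t * ((g:ℝ) * q) := by ring
    _ ≤ X^(-μ-1) * X := by
        apply mul_le_mul ht hgq (by positivity) (Real.rpow_nonneg hX0.le _)
    _ = X^(-μ) := by
        nth_rewrite 2 [← Real.rpow_one X]
        rw [← Real.rpow_add hX0]
        ring_nf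
  -- main case analysis
  rcases lt_or_ge q Q0 with hqQ | hqQ
  · -- small reduced height
    have hqM : qZ ≤ (M:ℤ) := by
      have h1 : q < (M:ℝ) := lt_of_lt_of_le hqQ hQ0M
      have h2 : qZ < (M:ℤ) := by rw [hq] at h1; exact_mod_cast h1
      omega
    have haM : |a| ≤ (M:ℤ) := le_trans (le_max_left _ _) hqM
    have hbM : |b| ≤ (M:ℤ) := le_trans (le_max_right _ _) hqM
    have hmem : ((a,b) : ℤ × ℤ) ∈ T := by
      rw [hT, Finset.mem_erase]
      refine ⟨?_, ?_⟩
      · intro hcon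
        apply habnz
        exact ⟨congrArg Prod.fst hcon, congrArg Prod.snd hcon⟩
      · rw [Finset.mem_product, Finset.mem_Icc, Finset.mem_Icc]
        constructor
        · constructor
          · linarith [neg_abs_le a, haM]
          · linarith [le_abs_self a, haM]
        · constructor
          · linarith [neg_abs_le b, hbM]
          · linarith [le_abs_self b, hbM]
    have hsmins : smin ≤ s := hzmin (a,b) hmem
    have hss : s ≤ s * q := le_mul_of_one_le_right hspos.le hq1
    linarith [hsq, P2]
  · -- large reduced height
    have hq2 : (2:ℝ) ≤ q := le_trans hQ0two hqQ
    have ha0 : a ≠ 0 := by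
      intro h0
      rw [h0] at hgcd1
      rw [Int.gcd_zero_right] at hgcd1
      have hb1 : |b| = 1 := by
        rw [Int.abs_eq_natAbs, hgcd1] ; norm_num
      have : qZ = 1 := by rw [hqZ, h0]; simp [hb1]
      rw [hq, this] at hq2; norm_num at hq2
    have hb0 : b ≠ 0 := by
      intro h0
      rw [h0] at hgcd1
      rw [Int.gcd_zero_left] at hgcd1
      have ha1 : |a| = 1 := by
        rw [Int.abs_eq_natAbs, hgcd1] ; norm_num
      have : qZ = 1 := by rw [hqZ, h0]; simp [ha1]
      rw [hq, this] at hq2; norm_num at hq2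
    set X' : ℝ := K * (2*q)^(1/lam:ℝ) with hX'
    have h2q0 : (0:ℝ) < 2*q := by linarith
    have h2q1 : (1:ℝ) ≤ (2*q)^(1/lam:ℝ) := by
      apply Real.one_le_rpow (by linarith) (by positivity)
    have hX'pos : 0 < X' := by
      rw [hX']; positivity
    have hX'X₀ : X₀ ≤ X' := by
      calc X₀ ≤ K := hKX₀
      _ = K * 1 := (mul_one K).symm
      _ ≤ K * (2*q)^(1/lam:ℝ) := mul_le_mul_of_nonneg_left h2q1 hK0.le
    have hX'lam : X'^lam = K^lam * (2*q) := by
      rw [hX', Real.mul_rpow hK0.le (Real.rpow_nonneg h2q0.le _),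
        ← Real.rpow_mul h2q0.le, one_div_mul_cancel hlam0.ne', Real.rpow_one]
    have hδcond : X'^(-lam-1) * (2*q*X') < 1 := by
      have e2 : X'^(-lam-1) * (2*q*X') = 2*q*(K^lam * (2*q))⁻¹ := by
        rw [show (-lam-1 : ℝ) = (-lam) + (-1) by ring, Real.rpow_add hX'pos,
          Real.rpow_neg_one, Real.rpow_neg hX'pos.le, hX'lam]
        field_simp
      rw [e2]
      have hKlam : 1 < K^lam := by
        rw [Real.one_lt_rpow_iff_of_pos hK0]
        exact Or.inl ⟨hK1, hlam0⟩
      rw [mul_inv]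
      have hKlam0 : 0 < K^lam := lt_trans one_pos hKlam
      calc 2*q*((K^lam)⁻¹ * (2*q)⁻¹) = (K^lam)⁻¹ * ((2*q) * (2*q)⁻¹) := by ring
      _ = (K^lam)⁻¹ := by rw [mul_inv_cancel₀ h2q0.ne', mul_one]
      _ < 1 := inv_lt_one_of_one_lt₀ hKlam
    rcases lt_or_ge (C*s*(2*q*X')) 1 with hforce | hforce
    · -- forcing applies: contradiction with height bound
      have hres := forcing p n ξ hn lam X' hX'pos a b ha0 hb0 hco
        (by rw [← hqZ, ← hq]; exact hδcond) (by rw [← hC, ← hqZ, ← hq, ← hs]; exact hforce)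
        (hu X' hX'X₀)
      rw [← hqZ, ← hq] at hres
      have hlt := hQ0 q hqQ
      rw [Real.rpow_natCast] at hlt
      rw [← hX'] at hlt
      linarith
    · -- no forcing: X is too small
      have h1 : 1/(2*C*X') ≤ s*q := by
        rw [div_le_iff₀ (by positivity)]
        calc (1:ℝ) ≤ C*s*(2*q*X') := hforce
        _ = s*q*(2*C*X') := by ring
      have hsq' : (2*C*X')⁻¹ ≤ (X^μ)⁻¹ := by
        rw [← Real.rpow_neg hX0.le]
        calc (2*C*X')⁻¹ = 1/(2*C*X') := (one_div _).symm
        _ ≤ s*q := h1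
        _ ≤ X^(-μ) := hsq
      have h2 : X^μ ≤ 2*C*X' :=
        (inv_le_inv₀ (by positivity) (by positivity : (0:ℝ) < X^μ)).mp hsq'
      have h3 : X' ≤ K * (2^(1/lam:ℝ) * X^(1/lam:ℝ)) := by
        rw [hX']
        apply mul_le_mul_of_nonneg_left _ hK0.le
        rw [← Real.mul_rpow (by norm_num) hX0.le]
        exact Real.rpow_le_rpow h2q0.le (by linarith) (by positivity)
      have h4 : X^μ ≤ B1 * X^(1/lam:ℝ) := by
        calc X^μ ≤ 2*C*X' := h2
        _ ≤ 2*C*(K * (2^(1/lam:ℝ) * X^(1/lam:ℝ))) :=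
            mul_le_mul_of_nonneg_left h3 (by positivity)
        _ = B1 * X^(1/lam:ℝ) := by rw [hB1]; ring
      have h5 : X^(μ - 1/lam) ≤ B1 := by
        have e1 : X^(μ - 1/lam) = X^μ * X^(-(1/lam):ℝ) := by
          rw [← Real.rpow_add hX0]; ring_nf
        have e2 : X^(1/lam:ℝ) * X^(-(1/lam):ℝ) = 1 := by
          rw [← Real.rpow_add hX0]; simp
        have hXn : (0:ℝ) < X^(-(1/lam):ℝ) := Real.rpow_pos_of_pos hX0 _
        calc X^(μ - 1/lam) = X^μ * X^(-(1/lam):ℝ) := e1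
        _ ≤ (B1 * X^(1/lam:ℝ)) * X^(-(1/lam):ℝ) := mul_le_mul_of_nonneg_right h4 hXn.le
        _ = B1 * (X^(1/lam:ℝ) * X^(-(1/lam):ℝ)) := by ring
        _ = B1 := by rw [e2, mul_one]
      linarith [P3, h5]

/-- `λ̂_n(ξ) ≤ max{1/n, 1/λ_1(ξ)}` (with `1/∞ = 0`). -/
theorem stmt11 (p : ℕ) [Fact p.Prime] (ξ : ℚ_[p]) (hξ : Transcendental ℚ ξ)
    (n : ℕ) (hn : 1 ≤ n) :
    lambdaHatExp p n ξ ≤ max (1 / (n : ℝ≥0∞)) (1 / lambdaExp p 1 ξ) := by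
  apply sSup_le
  rintro l ⟨lam, rfl, X₀, hu⟩
  have hnR : (0:ℝ) < n := by exact_mod_cast hn
  rcases le_or_gt lam (1/(n:ℝ)) with hle | hgt
  · -- lam ≤ 1/n
    apply le_max_of_le_left
    rcases le_or_gt lam 0 with h0 | h0
    · rw [ENNReal.ofReal_eq_zero.mpr h0]
      exact zero_le
    · rw [ENNReal.le_div_iff_mul_le (Or.inl (by exact_mod_cast (by omega : n ≠ 0) : ((n:ℝ≥0∞)) ≠ 0))
        (Or.inl (ENNReal.natCast_ne_top n))]
      calc ENNReal.ofReal lam * (n:ℝ≥0∞)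
          = ENNReal.ofReal lam * ENNReal.ofReal (n:ℝ) := by rw [ENNReal.ofReal_natCast]
      _ = ENNReal.ofReal (lam * n) := (ENNReal.ofReal_mul h0.le).symm
      _ ≤ ENNReal.ofReal 1 := by
          apply ENNReal.ofReal_le_ofReal
          calc lam * n ≤ (1/(n:ℝ)) * n := mul_le_mul_of_nonneg_right hle hnR.le
          _ = 1 := by field_simp
      _ = 1 := ENNReal.ofReal_one
  · -- 1/n < lam
    apply le_max_of_le_right
    have hlam0 : 0 < lam := lt_trans (by positivity) hgt
    have hA : lambdaExp p 1 ξ ≤ 1 / (ENNReal.ofReal lam) := by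
      apply sSup_le
      rintro l' ⟨μ, rfl, happ⟩
      rcases le_or_gt μ 0 with hμ | hμ
      · rw [ENNReal.ofReal_eq_zero.mpr hμ]
        exact zero_le
      · have hle1 : lam * μ ≤ 1 := by
          by_contra hgt1
          push_neg at hgt1
          exact main_contra p n ξ hξ hn lam μ hgt hμ hgt1 X₀ hu happ
        rw [ENNReal.le_div_iff_mul_le (Or.inr one_ne_zero) (Or.inr ENNReal.one_ne_top)]
        calc ENNReal.ofReal μ * ENNReal.ofReal lam = ENNReal.ofReal (μ * lam) :=
              (ENNReal.ofReal_mul hμ.le).symm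
        _ ≤ ENNReal.ofReal 1 := ENNReal.ofReal_le_ofReal (by linarith)
        _ = 1 := ENNReal.ofReal_one
    rw [ENNReal.le_div_iff_mul_le (Or.inr one_ne_zero) (Or.inr ENNReal.one_ne_top)]
    calc ENNReal.ofReal lam * lambdaExp p 1 ξ
        ≤ ENNReal.ofReal lam * (1 / ENNReal.ofReal lam) := mul_le_mul_right hA _
    _ = ENNReal.ofReal lam * (ENNReal.ofReal lam)⁻¹ := by rw [one_div]
    _ = 1 := ENNReal.mul_inv_cancel
        (by simp [ENNReal.ofReal_eq_zero, not_le, hlam0]) ENNReal.ofReal_ne_top
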